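/- arXiv:1002.0605 — 3 statements merged into one kernel-verified Lean document; each statement's English description precedes it below -/
import Mathlib

section
/- Let H be a countable abelian group and let G be a countable sofic group. Then the restricted wreath product H ≀ G is sofic. -/
/-- A group `G` is sofic if every finite subset can be approximated, up to any `ε > 0`,
by almost-multiplicative, almost-free maps into a finite symmetric group. -/
def IsSofic (G : Type*) [Group G] : Prop :=
  ∀ (F : Finset G) (ε : ℝ), 0 < ε →
    ∃ (n : ℕ), 0 < n ∧ ∃ φ : G → Equiv.Perm (Fin n),
      φ 1 = 1 ∧
      (∀ g ∈ F, ∀ h ∈ F,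
        ((Finset.univ.filter fun i : Fin n => φ (g * h) i ≠ φ g (φ h i)).card : ℝ) ≤ ε * n) ∧
      (∀ g ∈ F, g ≠ 1 →
        ((Finset.univ.filter fun i : Fin n => φ g i = i).card : ℝ) ≤ ε * n)

/-- The subgroup `⊕_{g ∈ G} H` of `G → H` consisting of finitely supported functions
(under pointwise multiplication). -/
def FinMulSupport (G H : Type*) [Group H] : Subgroup (G → H) where
  carrier := {f | (Function.mulSupport f).Finite}
  one_mem' := by simp
  mul_mem' := by
    intro a b ha hb
    exact (ha.union hb).subset (Function.mulSupport_mul a b)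
  inv_mem' := by
    intro a ha
    simpa [Function.mulSupport_inv] using ha

/-- The shift action of `G` on `⊕_{g ∈ G} H`, given by `(g · f)(x) = f (g⁻¹ x)`. -/
def shiftAut (G H : Type*) [Group G] [Group H] : G →* MulAut (FinMulSupport G H) where
  toFun g :=
    { toFun := fun f => ⟨fun x => (f : G → H) (g⁻¹ * x), by
        show (Function.mulSupport fun x => (f : G → H) (g⁻¹ * x)).Finite
        have : (Function.mulSupport fun x => (f : G → H) (g⁻¹ * x)) =
            (fun x => g⁻¹ * x) ⁻¹' Function.mulSupport (f : G → H) := rfl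
        rw [this]
        exact f.2.preimage ((mul_right_injective g⁻¹).injOn)⟩
      invFun := fun f => ⟨fun x => (f : G → H) (g * x), by
        show (Function.mulSupport fun x => (f : G → H) (g * x)).Finite
        have : (Function.mulSupport fun x => (f : G → H) (g * x)) =
            (fun x => g * x) ⁻¹' Function.mulSupport (f : G → H) := rfl
        rw [this]
        exact f.2.preimage ((mul_right_injective g).injOn)⟩
      left_inv := by
        intro f
        ext x
        simp
      right_inv := by
        intro f
        ext x
        simp
      map_mul' := by
        intro f₁ f₂
        ext x
        rfl }
  map_one' := by
    ext f x
    simp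
  map_mul' := by
    intro g₁ g₂
    ext f x
    simp [mul_assoc]

/-- The restricted wreath product `H ≀ G`, i.e. the semidirect product
`(⊕_{g ∈ G} H) ⋊ G` for the shift action of `G`. -/
abbrev WreathProduct (H G : Type*) [Group H] [Group G] :=
  FinMulSupport G H ⋊[shiftAut G H] G

open scoped Pointwise


lemma exists_hom_finite_sep (A : Type*) [CommGroup A] [Group.FG A] (T : Finset A) :
    ∃ (Q : Type) (_ : Fintype Q) (_ : CommGroup Q) (π : A →* Q),
      ∀ t ∈ T, t ≠ 1 → π t ≠ 1 := by
  classical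
  haveI : AddGroup.FG (Additive A) := inferInstance
  obtain ⟨r, ι, fι, p, hp, ee, ⟨eqv⟩⟩ := AddCommGroup.equiv_free_prod_directSum_zmod (Additive A)
  haveI := fι
  haveI : ∀ i, NeZero (p i ^ ee i) := fun i => ⟨pow_ne_zero _ (hp i).pos.ne'⟩
  set D := DirectSum ι fun i => ZMod (p i ^ ee i) with hD
  set m : ℕ := 1 + T.sup (fun t => Finset.univ.sup fun k : Fin r => ((eqv (Additive.ofMul t)).1 k).natAbs) with hm
  haveI : NeZero m := ⟨by omega⟩
  set first : (Fin r →₀ ℤ) →+ (Fin r → ZMod m) :=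
    { toFun := fun l k => ((l k : ℤ) : ZMod m)
      map_zero' := by ext k; simp
      map_add' := by intro x y; ext k; simp } with hfirst
  set πa : Additive A →+ (Fin r → ZMod m) × D :=
    (AddMonoidHom.prodMap first (AddMonoidHom.id D)).comp eqv.toAddMonoidHom with hπa
  haveI : Fintype D := by haveI : Finite D := inferInstanceAs (Finite (Π₀ i, ZMod (p i ^ ee i))); exact Fintype.ofFinite D
  refine ⟨Multiplicative ((Fin r → ZMod m) × D), inferInstance, inferInstance,
    { toFun := fun a => Multiplicative.ofAdd (πa (Additive.ofMul a))
      map_one' := by simp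
      map_mul' := by
        intro a b
        show Multiplicative.ofAdd (πa (Additive.ofMul (a * b))) = _
        rw [show Additive.ofMul (a * b) = Additive.ofMul a + Additive.ofMul b from rfl, map_add]
        rfl }, ?_⟩
  intro t ht ht1
  intro hcon
  have h0 : πa (Additive.ofMul t) = 0 := hcon
  have h2 : (eqv (Additive.ofMul t)).2 = 0 := congrArg Prod.snd h0
  have h1 : ∀ k, (((eqv (Additive.ofMul t)).1 k : ℤ) : ZMod m) = 0 := by
    intro k
    have := congrArg Prod.fst h0
    exact congrFun this k
  have hfst : (eqv (Additive.ofMul t)).1 = 0 := by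
    ext k
    have hd : (m : ℤ) ∣ (eqv (Additive.ofMul t)).1 k := by
      have := (ZMod.intCast_zmod_eq_zero_iff_dvd _ m).1 (h1 k)
      exact_mod_cast this
    by_contra hne
    have hlt : ((eqv (Additive.ofMul t)).1 k).natAbs < m := by
      have hle : ((eqv (Additive.ofMul t)).1 k).natAbs ≤
          T.sup (fun t => Finset.univ.sup fun k : Fin r => ((eqv (Additive.ofMul t)).1 k).natAbs) := by
        refine le_trans (Finset.le_sup (f := fun k : Fin r => ((eqv (Additive.ofMul t)).1 k).natAbs) (Finset.mem_univ k)) ?_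
        exact Finset.le_sup (f := fun t => Finset.univ.sup fun k : Fin r => ((eqv (Additive.ofMul t)).1 k).natAbs) ht
      omega
    have hdvd' : m ∣ ((eqv (Additive.ofMul t)).1 k).natAbs := by
      have := Int.natAbs_dvd_natAbs.mpr hd
      simpa using this
    have := Nat.le_of_dvd (Int.natAbs_pos.2 hne) hdvd'
    omega
  have : eqv (Additive.ofMul t) = 0 := by
    have : eqv (Additive.ofMul t) = ((eqv (Additive.ofMul t)).1, (eqv (Additive.ofMul t)).2) := rfl
    rw [this, hfst, h2]; rfl
  have : Additive.ofMul t = 0 := by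
    apply eqv.injective; simpa using this
  exact ht1 this

lemma exists_pihat (H : Type*) [CommGroup H] (T : Finset H) :
    ∃ (Q : Type) (_ : Fintype Q) (_ : CommGroup Q) (πh : H → Q),
      πh 1 = 1 ∧
      (∀ x y, x ∈ Subgroup.closure (T : Set H) → y ∈ Subgroup.closure (T : Set H) →
        πh (x * y) = πh x * πh y) ∧
      (∀ t ∈ T, t ≠ 1 → πh t ≠ 1) := by
  classical
  set A := Subgroup.closure (T : Set H) with hA
  haveI : Group.FG ↥A := Group.closure_finset_fg T
  obtain ⟨Q, fQ, cQ, π, hπ⟩ := exists_hom_finite_sep ↥A (T.subtype (· ∈ A))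
  refine ⟨Q, fQ, cQ, fun h => if hh : h ∈ A then π ⟨h, hh⟩ else 1, ?_, ?_, ?_⟩
  · show (if hh : (1:H) ∈ A then π ⟨1, hh⟩ else 1) = 1
    rw [dif_pos (one_mem A)]
    exact map_one π
  · intro x y hx hy
    show (if hh : x * y ∈ A then π ⟨x * y, hh⟩ else 1) =
      (if hh : x ∈ A then π ⟨x, hh⟩ else 1) * (if hh : y ∈ A then π ⟨y, hh⟩ else 1)
    rw [dif_pos (mul_mem hx hy), dif_pos hx, dif_pos hy, ← map_mul]
    rfl
  · intro t ht ht1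
    have htA : t ∈ A := Subgroup.subset_closure ht
    show (if hh : t ∈ A then π ⟨t, hh⟩ else 1) ≠ 1
    rw [dif_pos htA]
    refine hπ ⟨t, htA⟩ ?_ ?_
    · simpa [Finset.mem_subtype] using ht
    · simp [Subtype.ext_iff, ht1]

section Construction

variable {H G : Type*} [CommGroup H] [Group G] {Q : Type*} [CommGroup Q]

/-- Finite support of an element of `FinMulSupport G H` as a `Finset`. -/
noncomputable def suppF (f : ↥(FinMulSupport G H)) : Finset G :=
  Set.Finite.toFinset (f.2 : (Function.mulSupport (f : G → H)).Finite)

lemma mem_suppF {f : ↥(FinMulSupport G H)} {s : G} :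
    s ∈ suppF f ↔ (f : G → H) s ≠ 1 := by
  exact (Set.Finite.mem_toFinset (f.2 : (Function.mulSupport (f : G → H)).Finite)).trans Function.mem_mulSupport

lemma suppF_apply_eq_one {f : ↥(FinMulSupport G H)} {s : G} (h : s ∉ suppF f) :
    (f : G → H) s = 1 := by
  by_contra hne; exact h (mem_suppF.2 hne)

variable (n : ℕ) (φ : G → Equiv.Perm (Fin n)) (πh : H → Q)

/-- The lamp-adjustment vector. -/
noncomputable def lamp (f : ↥(FinMulSupport G H)) (g : G) (i : Fin n) : Fin n → Q :=
  fun j => ∏ s ∈ suppF f, if φ (s⁻¹ * g) i = j then (πh ((f : G → H) s))⁻¹ else 1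

lemma shiftAut_coe (g : G) (f : ↥(FinMulSupport G H)) (x : G) :
    ((shiftAut G H g f : ↥(FinMulSupport G H)) : G → H) x = (f : G → H) (g⁻¹ * x) := rfl

lemma mul_coe_apply (f f' : ↥(FinMulSupport G H)) (x : G) :
    ((f * f' : ↥(FinMulSupport G H)) : G → H) x = (f : G → H) x * (f' : G → H) x := rfl

set_option maxHeartbeats 1000000 in
/-- Key algebraic identity for lamp vectors at good points. -/
lemma lamp_mul (hπ1 : πh 1 = 1) (A : Subgroup H)
    (hπm : ∀ x y, x ∈ A → y ∈ A → πh (x * y) = πh x * πh y)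
    (f f' : ↥(FinMulSupport G H))
    (hf : ∀ s, (f : G → H) s ∈ A) (hf' : ∀ s, (f' : G → H) s ∈ A)
    (g g' : G) (i : Fin n)
    (hi : ∀ s ∈ suppF f, φ (s⁻¹ * g) (φ g' i) = φ (s⁻¹ * (g * g')) i) (j : Fin n) :
    lamp n φ πh (f * shiftAut G H g f') (g * g') i j
      = lamp n φ πh f' g' i j * lamp n φ πh f g (φ g' i) j := by
  classical
  set D : Finset G := suppF f ∪ (suppF f').image (fun s => g * s) with hD
  -- left side
  have hL : lamp n φ πh (f * shiftAut G H g f') (g * g') i j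
      = ∏ s ∈ D, ((if φ (s⁻¹ * (g * g')) i = j then (πh ((f' : G → H) (g⁻¹ * s)))⁻¹ else 1) *
          (if φ (s⁻¹ * (g * g')) i = j then (πh ((f : G → H) s))⁻¹ else 1)) := by
    have hsub : suppF (f * shiftAut G H g f') ⊆ D := by
      intro s hs
      by_contra hsD
      have h1 : (f : G → H) s = 1 :=
        suppF_apply_eq_one fun hc' => hsD (Finset.mem_union_left _ hc')
      have h2 : (f' : G → H) (g⁻¹ * s) = 1 :=
        suppF_apply_eq_one fun hc' => hsD (Finset.mem_union_right _
          (Finset.mem_image.2 ⟨g⁻¹ * s, hc', by group⟩))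
      have : ((f * shiftAut G H g f' : ↥(FinMulSupport G H)) : G → H) s = 1 := by
        rw [mul_coe_apply, shiftAut_coe, h1, h2, one_mul]
      exact (mem_suppF.1 hs) this
    calc lamp n φ πh (f * shiftAut G H g f') (g * g') i j
        = ∏ s ∈ suppF (f * shiftAut G H g f'),
            ((if φ (s⁻¹ * (g * g')) i = j then (πh ((f' : G → H) (g⁻¹ * s)))⁻¹ else 1) *
             (if φ (s⁻¹ * (g * g')) i = j then (πh ((f : G → H) s))⁻¹ else 1)) := by
          apply Finset.prod_congr rfl
          intro s _
          rw [mul_coe_apply, shiftAut_coe]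
          by_cases hcs : φ (s⁻¹ * (g * g')) i = j
          · rw [if_pos hcs, if_pos hcs, if_pos hcs,
              hπm _ _ (hf s) (hf' (g⁻¹ * s)), mul_inv_rev]
          · rw [if_neg hcs, if_neg hcs, if_neg hcs, one_mul]
      _ = _ := by
          apply Finset.prod_subset hsub
          intro s _ hs
          have hzero : (f : G → H) s * (f' : G → H) (g⁻¹ * s) = 1 := by
            have := suppF_apply_eq_one hs
            rwa [mul_coe_apply, shiftAut_coe] at this
          by_cases hcs : φ (s⁻¹ * (g * g')) i = j
          · rw [if_pos hcs, if_pos hcs, ← mul_inv_rev,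
              ← hπm _ _ (hf s) (hf' (g⁻¹ * s)), hzero, hπ1, inv_one]
          · rw [if_neg hcs, if_neg hcs, one_mul]
  -- first factor on the right
  have hR1 : lamp n φ πh f' g' i j
      = ∏ s ∈ D, (if φ (s⁻¹ * (g * g')) i = j then (πh ((f' : G → H) (g⁻¹ * s)))⁻¹ else 1) := by
    have himg : lamp n φ πh f' g' i j
        = ∏ s ∈ (suppF f').image (fun s => g * s),
            (if φ (s⁻¹ * (g * g')) i = j then (πh ((f' : G → H) (g⁻¹ * s)))⁻¹ else 1) := by
      rw [Finset.prod_image (by intro x _ y _ h; exact mul_left_cancel h)]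
      apply Finset.prod_congr rfl
      intro s _
      have e1 : (g * s)⁻¹ * (g * g') = s⁻¹ * g' := by group
      have e2 : g⁻¹ * (g * s) = s := by group
      rw [e1, e2]
    rw [himg]
    apply Finset.prod_subset Finset.subset_union_right
    intro s _ hs
    have h2 : (f' : G → H) (g⁻¹ * s) = 1 := by
      apply suppF_apply_eq_one
      intro hc'
      exact hs (Finset.mem_image.2 ⟨g⁻¹ * s, hc', by group⟩)
    by_cases hcs : φ (s⁻¹ * (g * g')) i = j
    · rw [if_pos hcs, h2, hπ1, inv_one]
    · rw [if_neg hcs]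
  -- second factor on the right
  have hR2 : lamp n φ πh f g (φ g' i) j
      = ∏ s ∈ D, (if φ (s⁻¹ * (g * g')) i = j then (πh ((f : G → H) s))⁻¹ else 1) := by
    have hcong : lamp n φ πh f g (φ g' i) j
        = ∏ s ∈ suppF f, (if φ (s⁻¹ * (g * g')) i = j then (πh ((f : G → H) s))⁻¹ else 1) := by
      apply Finset.prod_congr rfl
      intro s hsmem
      rw [hi s hsmem]
    rw [hcong]
    apply Finset.prod_subset Finset.subset_union_left
    intro s _ hs
    have h1 : (f : G → H) s = 1 := suppF_apply_eq_one hs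
    by_cases hcs : φ (s⁻¹ * (g * g')) i = j
    · rw [if_pos hcs, h1, hπ1, inv_one]
    · rw [if_neg hcs]
  rw [hL, hR1, hR2, Finset.prod_mul_distrib]

/-- Evaluation of the lamp vector when the base element is trivial and `i` separates supports. -/
lemma lamp_single (f : ↥(FinMulSupport G H)) (s₀ : G) (hs₀ : s₀ ∈ suppF f) (i : Fin n)
    (hi : ∀ s ∈ suppF f, s ≠ s₀ → φ s⁻¹ i ≠ φ s₀⁻¹ i) :
    lamp n φ πh f 1 i (φ s₀⁻¹ i) = (πh ((f : G → H) s₀))⁻¹ := by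
  classical
  rw [lamp]
  rw [Finset.prod_eq_single_of_mem s₀ hs₀]
  · rw [if_pos (by rw [mul_one])]
  · intro s hs hne
    rw [if_neg]
    rw [mul_one]
    exact hi s hs hne

/-- The permutation of `(Fin n → Q) × Fin n` attached to an element of the wreath product. -/
noncomputable def wPerm (w : WreathProduct H G) :
    Equiv.Perm ((Fin n → Q) × Fin n) where
  toFun p := (p.1 * lamp n φ πh w.left w.right p.2, φ w.right p.2)
  invFun p := (p.1 * (lamp n φ πh w.left w.right ((φ w.right)⁻¹ p.2))⁻¹, (φ w.right)⁻¹ p.2)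
  left_inv p := by
    ext <;> simp
  right_inv p := by
    ext <;> simp

lemma wPerm_apply (w : WreathProduct H G) (p : (Fin n → Q) × Fin n) :
    wPerm n φ πh w p = (p.1 * lamp n φ πh w.left w.right p.2, φ w.right p.2) := rfl

lemma lamp_one (hπ1 : πh 1 = 1) (g : G) (i : Fin n) :
    lamp n φ πh (1 : ↥(FinMulSupport G H)) g i = 1 := by
  funext j
  rw [lamp]
  apply Finset.prod_eq_one
  intro s hs
  have h1 : ((1 : ↥(FinMulSupport G H)) : G → H) s = 1 := rfl
  rw [h1, hπ1, inv_one, ite_self]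

lemma wPerm_one (hφ1 : φ 1 = 1) (hπ1 : πh 1 = 1) :
    wPerm n φ πh (1 : WreathProduct H G) = 1 := by
  apply Equiv.ext
  intro p
  rw [wPerm_apply]
  show (_, _) = p
  rw [SemidirectProduct.one_left, SemidirectProduct.one_right, lamp_one n φ πh hπ1, hφ1,
    mul_one]
  rfl

end Construction


section Counting

open Finset

lemma card_filter_equiv {α β : Type*} [Fintype α] [Fintype β] (e : α ≃ β) (p : β → Prop)
    [DecidablePred p] [DecidablePred fun a => p (e a)] :
    (Finset.univ.filter p).card = (Finset.univ.filter fun a => p (e a)).card := by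
  apply Finset.card_bij (fun (b : β) (_ : b ∈ Finset.univ.filter p) => e.symm b)
  · intro b hb
    simp only [Finset.mem_filter, Finset.mem_univ, true_and] at hb ⊢
    simpa using hb
  · intro b₁ h₁ b₂ h₂ h
    exact e.symm.injective h
  · intro a ha
    simp only [Finset.mem_filter, Finset.mem_univ, true_and] at ha
    exact ⟨e a, by simpa using ha, by simp⟩

lemma card_filter_snd {α β : Type*} [Fintype α] [Fintype β] [DecidableEq β] (B : Finset β)
    [DecidablePred fun p : α × β => p.2 ∈ B] :
    (Finset.univ.filter fun p : α × β => p.2 ∈ B).card = Fintype.card α * B.card := by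
  have : (Finset.univ.filter fun p : α × β => p.2 ∈ B) = Finset.univ ×ˢ B := by
    ext ⟨a, b⟩
    simp
  rw [this, Finset.card_product, Finset.card_univ]

lemma card_biUnion_le_real {ι α : Type*} [DecidableEq α] (s : Finset ι) (f : ι → Finset α)
    (r : ℝ) (h : ∀ i ∈ s, ((f i).card : ℝ) ≤ r) :
    ((s.biUnion f).card : ℝ) ≤ s.card * r := by
  have h1 := Finset.card_biUnion_le (s := s) (t := f)
  have h2 : ((s.biUnion f).card : ℝ) ≤ ∑ i ∈ s, ((f i).card : ℝ) := by
    exact_mod_cast h1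
  calc ((s.biUnion f).card : ℝ) ≤ ∑ i ∈ s, ((f i).card : ℝ) := h2
    _ ≤ ∑ _i ∈ s, r := Finset.sum_le_sum h
    _ = s.card * r := by rw [Finset.sum_const, nsmul_eq_mul]

lemma card_union_biUnion_le_real {ι α : Type*} [DecidableEq α] (B0 : Finset α)
    (s : Finset ι) (f : ι → Finset α) (r : ℝ) (h0 : (B0.card : ℝ) ≤ r)
    (h : ∀ i ∈ s, ((f i).card : ℝ) ≤ r) :
    (((B0 ∪ s.biUnion f).card : ℝ)) ≤ (1 + s.card) * r := by
  have h1 := Finset.card_union_le B0 (s.biUnion f)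
  have h2 : (((B0 ∪ s.biUnion f).card : ℝ)) ≤ (B0.card : ℝ) + ((s.biUnion f).card : ℝ) := by
    exact_mod_cast h1
  have h3 := card_biUnion_le_real s f r h
  calc (((B0 ∪ s.biUnion f).card : ℝ)) ≤ (B0.card : ℝ) + ((s.biUnion f).card : ℝ) := h2
    _ ≤ r + s.card * r := add_le_add h0 h3
    _ = (1 + s.card) * r := by ring

lemma coincidence_card_le {G : Type*} [Group G] {n : ℕ} (φ : G → Equiv.Perm (Fin n))
    (hφ1 : φ 1 = 1) (a b c : G) (hbc : b * c = 1) {r1 r2 r3 : ℝ}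
    (h1 : ((Finset.univ.filter fun i => φ (b * a) i ≠ φ b (φ a i)).card : ℝ) ≤ r1)
    (h2 : ((Finset.univ.filter fun i => φ (b * c) i ≠ φ b (φ c i)).card : ℝ) ≤ r2)
    (h3 : ((Finset.univ.filter fun i => φ (b * a) i = i).card : ℝ) ≤ r3) :
    ((Finset.univ.filter fun i => φ a i = φ c i).card : ℝ) ≤ r1 + r2 + r3 := by
  have hsub : (Finset.univ.filter fun i => φ a i = φ c i) ⊆
      ((Finset.univ.filter fun i => φ (b * a) i ≠ φ b (φ a i)) ∪
        (Finset.univ.filter fun i => φ (b * c) i ≠ φ b (φ c i))) ∪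
      (Finset.univ.filter fun i => φ (b * a) i = i) := by
    intro i hi
    simp only [Finset.mem_filter, Finset.mem_univ, true_and] at hi
    simp only [Finset.mem_union, Finset.mem_filter, Finset.mem_univ, true_and]
    by_cases hx1 : φ (b * a) i = φ b (φ a i)
    · by_cases hx2 : φ (b * c) i = φ b (φ c i)
      · right
        rw [hx1, hi, ← hx2, hbc, hφ1]
        rfl
      · left; right; exact hx2
    · left; left; exact hx1
  have hcard := Finset.card_le_card hsub
  have hu1 := Finset.card_union_le
    ((Finset.univ.filter fun i => φ (b * a) i ≠ φ b (φ a i)) ∪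
      (Finset.univ.filter fun i => φ (b * c) i ≠ φ b (φ c i)))
    (Finset.univ.filter fun i => φ (b * a) i = i)
  have hu2 := Finset.card_union_le
    (Finset.univ.filter fun i => φ (b * a) i ≠ φ b (φ a i))
    (Finset.univ.filter fun i => φ (b * c) i ≠ φ b (φ c i))
  have c0 : ((Finset.univ.filter fun i => φ a i = φ c i).card : ℝ) ≤
      ((((Finset.univ.filter fun i => φ (b * a) i ≠ φ b (φ a i)) ∪
        (Finset.univ.filter fun i => φ (b * c) i ≠ φ b (φ c i))) ∪
      (Finset.univ.filter fun i => φ (b * a) i = i)).card : ℝ) := by exact_mod_cast hcard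
  have c1 : ((((Finset.univ.filter fun i => φ (b * a) i ≠ φ b (φ a i)) ∪
        (Finset.univ.filter fun i => φ (b * c) i ≠ φ b (φ c i))) ∪
      (Finset.univ.filter fun i => φ (b * a) i = i)).card : ℝ) ≤
      (((Finset.univ.filter fun i => φ (b * a) i ≠ φ b (φ a i)) ∪
        (Finset.univ.filter fun i => φ (b * c) i ≠ φ b (φ c i))).card : ℝ) +
      ((Finset.univ.filter fun i => φ (b * a) i = i).card : ℝ) := by exact_mod_cast hu1
  have c2 : (((Finset.univ.filter fun i => φ (b * a) i ≠ φ b (φ a i)) ∪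
        (Finset.univ.filter fun i => φ (b * c) i ≠ φ b (φ c i))).card : ℝ) ≤
      ((Finset.univ.filter fun i => φ (b * a) i ≠ φ b (φ a i)).card : ℝ) +
      ((Finset.univ.filter fun i => φ (b * c) i ≠ φ b (φ c i)).card : ℝ) := by exact_mod_cast hu2
  linarith

lemma sofic_count_aux {α β : Type*} [Fintype α] [Fintype β] [DecidableEq β]
    (e : (α × β) ≃ Fin (Fintype.card (α × β)))
    (pred : Fin (Fintype.card (α × β)) → Prop) [DecidablePred pred]
    (rel : α × β → Prop) [DecidablePred rel] [DecidablePred fun p : α × β => pred (e p)]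
    (hiff : ∀ p, pred (e p) ↔ rel p) (B : Finset β)
    (hB : ∀ p, rel p → p.2 ∈ B) :
    ((Finset.univ.filter pred).card : ℝ) ≤ (Fintype.card α : ℝ) * B.card := by
  classical
  rw [card_filter_equiv e pred]
  have h1 : (Finset.univ.filter fun p => pred (e p)) ⊆
      (Finset.univ.filter fun p : α × β => p.2 ∈ B) := by
    intro p hp
    simp only [Finset.mem_filter, Finset.mem_univ, true_and] at hp ⊢
    exact hB p ((hiff p).1 hp)
  have h2 := Finset.card_le_card h1
  have h3 : (Finset.univ.filter fun p : α × β => p.2 ∈ B).card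
      = Fintype.card α * B.card := card_filter_snd B
  calc ((Finset.univ.filter fun p => pred (e p)).card : ℝ)
      ≤ ((Finset.univ.filter fun p : α × β => p.2 ∈ B).card : ℝ) := by exact_mod_cast h2
    _ = _ := by rw [h3]; push_cast; ring

end Counting



set_option maxHeartbeats 0 in
/-- If `H` is a countable abelian group and `G` a countable sofic group, then the
restricted wreath product `H ≀ G` is sofic. -/
theorem wreathProduct_isSofic (H G : Type*) [CommGroup H] [Group G]
    [Countable H] [Countable G] (hG : IsSofic G) :
    IsSofic (WreathProduct H G) := by
  classical
  intro F ε hε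
  -- finite data on the `G` side
  set F1 : Finset ↥(FinMulSupport G H) := F.image (fun w => w.left) with hF1
  set Ssupp : Finset G := F1.biUnion (fun f => suppF f) with hSsuppDef
  set S0 : Finset G := insert (1 : G) (F.image (fun w => w.right) ∪ Ssupp) with hS0def
  set S1 : Finset G := S0 ∪ S0.image (fun a => a⁻¹) with hS1def
  set S3 : Finset G := S1 * S1 * S1 with hS3def
  have h1S1 : (1 : G) ∈ S1 := Finset.mem_union_left _ (Finset.mem_insert_self _ _)
  have hS0S1 : S0 ⊆ S1 := Finset.subset_union_left
  have hinvS1 : ∀ a ∈ S0, a⁻¹ ∈ S1 := fun a ha =>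
    Finset.mem_union_right _ (Finset.mem_image_of_mem _ ha)
  have hmul3 : ∀ a b c : G, a ∈ S1 → b ∈ S1 → c ∈ S1 → a * b * c ∈ S3 := fun a b c ha hb hc =>
    Finset.mul_mem_mul (Finset.mul_mem_mul ha hb) hc
  have hN1 : ∀ a ∈ S1, a ∈ S3 := fun a ha => by
    have := hmul3 a 1 1 ha h1S1 h1S1
    simpa using this
  have hN2 : ∀ a b : G, a ∈ S1 → b ∈ S1 → a * b ∈ S3 := fun a b ha hb => by
    have := hmul3 a b 1 ha hb h1S1
    simpa using this
  have hrS0 : ∀ w ∈ F, SemidirectProduct.right w ∈ S0 := fun w hw =>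
    Finset.mem_insert_of_mem (Finset.mem_union_left _ (Finset.mem_image_of_mem _ hw))
  have hsS0 : ∀ w ∈ F, ∀ s ∈ suppF (SemidirectProduct.left w), s ∈ Ssupp := fun w hw s hs =>
    Finset.mem_biUnion.2 ⟨w.left, Finset.mem_image_of_mem _ hw, hs⟩
  have hSsuppS0 : Ssupp ⊆ S0 := fun s hs =>
    Finset.mem_insert_of_mem (Finset.mem_union_right _ hs)
  have hsuppcard : ∀ w ∈ F, (suppF (SemidirectProduct.left w)).card ≤ Ssupp.card := by
    intro w hw
    apply Finset.card_le_card
    intro s hs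
    exact hsS0 w hw s hs
  -- the tolerance for the sofic approximation of `G`
  set M : ℕ := 3 * Ssupp.card + 3 with hMdef
  have hMpos : (0 : ℝ) < (M : ℝ) := by
    have : 0 < M := by omega
    exact_mod_cast this
  set ε₀ : ℝ := ε / M with hε₀def
  have hε₀pos : 0 < ε₀ := div_pos hε hMpos
  have hMε : (M : ℝ) * ε₀ = ε := by
    rw [hε₀def, mul_div_cancel₀ _ (ne_of_gt hMpos)]
  obtain ⟨n, hn, φ, hφ1, hmulG, hfixG⟩ := hG S3 ε₀ hε₀pos
  -- finite data on the `H` side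
  set T : Finset H := F1.biUnion (fun f => (suppF f).image (fun s => (f : G → H) s)) with hTdef
  obtain ⟨Q, fQ, cQ, πh, hπ1, hπm, hπne⟩ := exists_pihat H T
  letI := fQ
  letI := cQ
  have hTval : ∀ w ∈ F, ∀ s ∈ suppF (SemidirectProduct.left w), (w.left : G → H) s ∈ T := by
    intro w hw s hs
    exact Finset.mem_biUnion.2 ⟨w.left, Finset.mem_image_of_mem _ hw,
      Finset.mem_image_of_mem _ hs⟩
  have hvalA : ∀ w ∈ F, ∀ s, ((SemidirectProduct.left w : ↥(FinMulSupport G H)) : G → H) s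
      ∈ Subgroup.closure (T : Set H) := by
    intro w hw s
    by_cases hs : s ∈ suppF w.left
    · exact Subgroup.subset_closure (hTval w hw s hs)
    · rw [suppF_apply_eq_one hs]
      exact one_mem _
  -- the model space
  haveI : Nonempty ((Fin n → Q) × Fin n) := ⟨⟨fun _ => 1, ⟨0, hn⟩⟩⟩
  set e : ((Fin n → Q) × Fin n) ≃ Fin (Fintype.card ((Fin n → Q) × Fin n)) :=
    Fintype.equivFin ((Fin n → Q) × Fin n) with hedef
  set N : ℕ := Fintype.card ((Fin n → Q) × Fin n) with hNdef
  have hNpos : 0 < N := Fintype.card_pos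
  have hNcast : (N : ℝ) = (Fintype.card (Fin n → Q) : ℝ) * n := by
    rw [hNdef, Fintype.card_prod, Fintype.card_fin]
    push_cast
    ring
  have hqQpos : (0 : ℝ) ≤ (Fintype.card (Fin n → Q) : ℝ) := by positivity
  -- the sofic approximation of the wreath product
  refine ⟨N, hNpos, fun w => Equiv.permCongr e (wPerm n φ πh w), ?_, ?_, ?_⟩
  · -- identity goes to the identity
    have h1 : wPerm n φ πh (1 : WreathProduct H G) = 1 := wPerm_one n φ πh hφ1 hπ1
    apply Equiv.ext
    intro x
    show e.permCongr (wPerm n φ πh 1) x = x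
    rw [h1]
    simp
  · -- almost multiplicativity
    intro w hw w' hw'
    -- the bad set of indices
    set Bad : Finset (Fin n) :=
      (Finset.univ.filter fun i =>
        φ (SemidirectProduct.right w * SemidirectProduct.right w') i ≠
          φ (SemidirectProduct.right w) (φ (SemidirectProduct.right w') i)) ∪
      (suppF (SemidirectProduct.left w)).biUnion (fun s =>
        Finset.univ.filter fun i =>
          φ ((s⁻¹ * SemidirectProduct.right w) * SemidirectProduct.right w') i ≠
            φ (s⁻¹ * SemidirectProduct.right w) (φ (SemidirectProduct.right w') i)) with hBadDef
    -- pointwise: outside the bad set the permutations compose exactly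
    have hgood : ∀ p : (Fin n → Q) × Fin n, wPerm n φ πh (w * w') p ≠ wPerm n φ πh w (wPerm n φ πh w' p) →
        p.2 ∈ Bad := by
      intro p hne
      by_contra hpB
      apply hne
      simp only [hBadDef, Finset.mem_union, Finset.mem_biUnion, Finset.mem_filter,
        Finset.mem_univ, true_and, not_or, not_exists, not_and, not_not] at hpB
      obtain ⟨h0, hs⟩ := hpB
      have hi : ∀ s ∈ suppF (SemidirectProduct.left w),
          φ (s⁻¹ * SemidirectProduct.right w) (φ (SemidirectProduct.right w') p.2) =
            φ (s⁻¹ * (SemidirectProduct.right w * SemidirectProduct.right w')) p.2 := by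
        intro s hsmem
        rw [← mul_assoc]
        exact (hs s hsmem).symm
      rw [wPerm_apply, wPerm_apply, wPerm_apply]
      have h2nd : φ (SemidirectProduct.right (w * w')) p.2 =
          φ (SemidirectProduct.right w) (φ (SemidirectProduct.right w') p.2) := by
        rw [SemidirectProduct.mul_right]
        exact h0
      refine Prod.ext ?_ h2nd
      have hLeq : SemidirectProduct.left (w * w') =
          SemidirectProduct.left w * shiftAut G H (SemidirectProduct.right w)
            (SemidirectProduct.left w') := SemidirectProduct.mul_left w w'
      have hReq : SemidirectProduct.right (w * w') =
          SemidirectProduct.right w * SemidirectProduct.right w' :=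
        SemidirectProduct.mul_right w w'
      show p.1 * lamp n φ πh (SemidirectProduct.left (w * w'))
          (SemidirectProduct.right (w * w')) p.2 = _
      rw [hLeq, hReq]
      funext j
      have hkey := lamp_mul n φ πh hπ1 (Subgroup.closure (T : Set H)) hπm
        (SemidirectProduct.left w) (SemidirectProduct.left w') (hvalA w hw) (hvalA w' hw')
        (SemidirectProduct.right w) (SemidirectProduct.right w') p.2 hi j
      show p.1 j * lamp n φ πh (SemidirectProduct.left w * shiftAut G H
          (SemidirectProduct.right w) (SemidirectProduct.left w'))
          (SemidirectProduct.right w * SemidirectProduct.right w') p.2 j = _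
      rw [hkey]
      show _ = (p.1 j * lamp n φ πh (SemidirectProduct.left w')
          (SemidirectProduct.right w') p.2 j) * lamp n φ πh (SemidirectProduct.left w)
          (SemidirectProduct.right w) (φ (SemidirectProduct.right w') p.2) j
      rw [mul_assoc]
    -- counting
    have hBadCard : ((Bad.card : ℝ)) ≤ (M : ℝ) * (ε₀ * n) := by
      have hc1 : ((Finset.univ.filter fun i =>
          φ (SemidirectProduct.right w * SemidirectProduct.right w') i ≠
            φ (SemidirectProduct.right w) (φ (SemidirectProduct.right w') i)).card : ℝ)
          ≤ ε₀ * n :=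
        hmulG _ (hN1 _ (hS0S1 (hrS0 w hw))) _ (hN1 _ (hS0S1 (hrS0 w' hw')))
      have hc2 : ∀ s ∈ suppF (SemidirectProduct.left w),
          ((Finset.univ.filter fun i =>
            φ ((s⁻¹ * SemidirectProduct.right w) * SemidirectProduct.right w') i ≠
              φ (s⁻¹ * SemidirectProduct.right w) (φ (SemidirectProduct.right w') i)).card : ℝ)
          ≤ ε₀ * n := by
        intro s hsmem
        refine hmulG _ ?_ _ (hN1 _ (hS0S1 (hrS0 w' hw')))
        exact hN2 _ _ (hinvS1 _ (hSsuppS0 (hsS0 w hw s hsmem))) (hS0S1 (hrS0 w hw))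
      have hsplit := card_union_biUnion_le_real
        (Finset.univ.filter fun i =>
          φ (SemidirectProduct.right w * SemidirectProduct.right w') i ≠
            φ (SemidirectProduct.right w) (φ (SemidirectProduct.right w') i))
        (suppF (SemidirectProduct.left w))
        (fun s => Finset.univ.filter fun i =>
          φ ((s⁻¹ * SemidirectProduct.right w) * SemidirectProduct.right w') i ≠
            φ (s⁻¹ * SemidirectProduct.right w) (φ (SemidirectProduct.right w') i))
        (ε₀ * n) hc1 hc2
      have hle : (1 : ℝ) + (suppF (SemidirectProduct.left w)).card ≤ (M : ℝ) := by
        have h := hsuppcard w hw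
        have hnat : 1 + (suppF (SemidirectProduct.left w)).card ≤ M := by omega
        exact_mod_cast hnat
      calc ((Bad.card : ℝ)) ≤ (1 + (suppF (SemidirectProduct.left w)).card) * (ε₀ * n) :=
            hsplit
        _ ≤ (M : ℝ) * (ε₀ * n) := by
            apply mul_le_mul_of_nonneg_right hle
            positivity
    -- transfer to `Fin N`
    have htrans : ((Finset.univ.filter fun i : Fin N =>
        (Equiv.permCongr e (wPerm n φ πh (w * w'))) i ≠
          (Equiv.permCongr e (wPerm n φ πh w)) ((Equiv.permCongr e (wPerm n φ πh w')) i)).card : ℝ)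
        ≤ (Fintype.card (Fin n → Q) : ℝ) * Bad.card := by
      refine sofic_count_aux e _
        (fun p => wPerm n φ πh (w * w') p ≠ wPerm n φ πh w (wPerm n φ πh w' p)) ?_ Bad hgood
      intro p
      simp only [Equiv.permCongr_apply, Equiv.symm_apply_apply]
      exact not_congr e.apply_eq_iff_eq
    calc ((Finset.univ.filter fun i : Fin N =>
          (Equiv.permCongr e (wPerm n φ πh (w * w'))) i ≠
            (Equiv.permCongr e (wPerm n φ πh w)) ((Equiv.permCongr e (wPerm n φ πh w')) i)).card : ℝ)
        ≤ (Fintype.card (Fin n → Q) : ℝ) * Bad.card := htrans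
      _ ≤ (Fintype.card (Fin n → Q) : ℝ) * ((M : ℝ) * (ε₀ * n)) := by
          apply mul_le_mul_of_nonneg_left hBadCard hqQpos
      _ = ε * N := by
          rw [hNcast, ← hMε]
          ring
  · -- almost freeness
    intro w hw hwne
    by_cases hr : SemidirectProduct.right w = 1
    · -- trivial `G`-part : use the lamp coordinates
      have hl : SemidirectProduct.left w ≠ 1 := by
        intro hleft
        exact hwne (SemidirectProduct.ext (by rw [hleft]; rfl) (by rw [hr]; rfl))
      have hex : ∃ s₀, s₀ ∈ suppF (SemidirectProduct.left w) := by
        by_contra hcon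
        push_neg at hcon
        apply hl
        have : ((SemidirectProduct.left w : ↥(FinMulSupport G H)) : G → H) = 1 := by
          funext s
          exact suppF_apply_eq_one (hcon s)
        exact Subtype.ext this
      obtain ⟨s₀, hs₀⟩ := hex
      set Bad : Finset (Fin n) := (suppF (SemidirectProduct.left w)).biUnion (fun s =>
        Finset.univ.filter fun i => s ≠ s₀ ∧ φ s⁻¹ i = φ s₀⁻¹ i) with hBadDef
      have hgood : ∀ p : (Fin n → Q) × Fin n, wPerm n φ πh w p = p → p.2 ∈ Bad := by
        intro p hfix
        by_contra hpB
        simp only [hBadDef, Finset.mem_biUnion, Finset.mem_filter, Finset.mem_univ, true_and,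
          not_exists, not_and] at hpB
        have hsep : ∀ s ∈ suppF (SemidirectProduct.left w), s ≠ s₀ →
            φ s⁻¹ p.2 ≠ φ s₀⁻¹ p.2 := by
          intro s hsmem hne hcon
          exact (hpB s hsmem) hne hcon
        have hlampval := lamp_single n φ πh (SemidirectProduct.left w) s₀ hs₀ p.2 hsep
        have hfix1 : p.1 * lamp n φ πh (SemidirectProduct.left w)
            (SemidirectProduct.right w) p.2 = p.1 := congrArg Prod.fst hfix
        rw [hr] at hfix1
        have := congrFun hfix1 (φ s₀⁻¹ p.2)
        rw [Pi.mul_apply] at this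
        have hone : lamp n φ πh (SemidirectProduct.left w) 1 p.2 (φ s₀⁻¹ p.2) = 1 := by
          have h' : p.1 (φ s₀⁻¹ p.2) * lamp n φ πh (SemidirectProduct.left w) 1 p.2 (φ s₀⁻¹ p.2)
              = p.1 (φ s₀⁻¹ p.2) * 1 := by rw [mul_one]; exact this
          exact mul_left_cancel h'
        rw [hlampval] at hone
        have hval : ((SemidirectProduct.left w : ↥(FinMulSupport G H)) : G → H) s₀ ≠ 1 :=
          mem_suppF.1 hs₀
        have := hπne _ (hTval w hw s₀ hs₀) hval
        exact this (inv_eq_one.1 hone)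
      have hBadCard : ((Bad.card : ℝ)) ≤ (M : ℝ) * (ε₀ * n) := by
        have hc : ∀ s ∈ suppF (SemidirectProduct.left w),
            ((Finset.univ.filter fun i : Fin n => s ≠ s₀ ∧ φ s⁻¹ i = φ s₀⁻¹ i).card : ℝ)
            ≤ 3 * (ε₀ * n) := by
          intro s hsmem
          by_cases hss : s = s₀
          · have hempty : (Finset.univ.filter fun i : Fin n => s ≠ s₀ ∧ φ s⁻¹ i = φ s₀⁻¹ i)
                = ∅ := by
              apply Finset.filter_false_of_mem
              intro i _
              simp [hss]
            rw [hempty]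
            simp
            positivity
          · have hmemS3s₀ : s₀ ∈ S3 := hN1 _ (hS0S1 (hSsuppS0 (hsS0 w hw s₀ hs₀)))
            have hmemS1s₀ : s₀ ∈ S1 := hS0S1 (hSsuppS0 (hsS0 w hw s₀ hs₀))
            have hmemS1si : s⁻¹ ∈ S1 := hinvS1 _ (hSsuppS0 (hsS0 w hw s hsmem))
            have hmemS1s₀i : s₀⁻¹ ∈ S1 := hinvS1 _ (hSsuppS0 (hsS0 w hw s₀ hs₀))
            have hb1 := hmulG s₀ hmemS3s₀ s⁻¹ (hN1 _ hmemS1si)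
            have hb2 := hmulG s₀ hmemS3s₀ s₀⁻¹ (hN1 _ hmemS1s₀i)
            have hb3 := hfixG (s₀ * s⁻¹) (hN2 _ _ hmemS1s₀ hmemS1si)
              (by rw [Ne, mul_inv_eq_one]; exact fun h => hss h.symm)
            have hco := coincidence_card_le φ hφ1 s⁻¹ s₀ s₀⁻¹ (mul_inv_cancel s₀)
              hb1 hb2 hb3
            have hsub2 : (Finset.univ.filter fun i : Fin n => s ≠ s₀ ∧ φ s⁻¹ i = φ s₀⁻¹ i) ⊆
                (Finset.univ.filter fun i : Fin n => φ s⁻¹ i = φ s₀⁻¹ i) := by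
              intro i hi
              simp only [Finset.mem_filter, Finset.mem_univ, true_and] at hi ⊢
              exact hi.2
            have := Finset.card_le_card hsub2
            have hcast : ((Finset.univ.filter fun i : Fin n =>
                s ≠ s₀ ∧ φ s⁻¹ i = φ s₀⁻¹ i).card : ℝ) ≤
                ((Finset.univ.filter fun i : Fin n => φ s⁻¹ i = φ s₀⁻¹ i).card : ℝ) := by
              exact_mod_cast this
            linarith
        have hsum : ((Bad.card : ℝ)) ≤
            (suppF (SemidirectProduct.left w)).card * (3 * (ε₀ * n)) :=
          card_biUnion_le_real _ _ _ hc
        have hle : ((suppF (SemidirectProduct.left w)).card : ℝ) * 3 ≤ (M : ℝ) := by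
          have h := hsuppcard w hw
          have hnat : (suppF (SemidirectProduct.left w)).card * 3 ≤ M := by omega
          exact_mod_cast hnat
        calc ((Bad.card : ℝ)) ≤ (suppF (SemidirectProduct.left w)).card * (3 * (ε₀ * n)) := hsum
          _ = ((suppF (SemidirectProduct.left w)).card * 3) * (ε₀ * n) := by ring
          _ ≤ (M : ℝ) * (ε₀ * n) := by
              apply mul_le_mul_of_nonneg_right ?_ (by positivity)
              exact_mod_cast hle
      -- transfer
      have htrans : ((Finset.univ.filter fun i : Fin N =>
          (Equiv.permCongr e (wPerm n φ πh w)) i = i).card : ℝ)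
          ≤ (Fintype.card (Fin n → Q) : ℝ) * Bad.card := by
        refine sofic_count_aux e _ (fun p => wPerm n φ πh w p = p) ?_ Bad hgood
        intro p
        simp only [Equiv.permCongr_apply, Equiv.symm_apply_apply]
        exact e.apply_eq_iff_eq
      calc ((Finset.univ.filter fun i : Fin N =>
            (Equiv.permCongr e (wPerm n φ πh w)) i = i).card : ℝ)
          ≤ (Fintype.card (Fin n → Q) : ℝ) * Bad.card := htrans
        _ ≤ (Fintype.card (Fin n → Q) : ℝ) * ((M : ℝ) * (ε₀ * n)) := by
            apply mul_le_mul_of_nonneg_left hBadCard hqQpos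
        _ = ε * N := by
            rw [hNcast, ← hMε]
            ring
    · -- nontrivial `G`-part : use the position coordinate
      set Bad : Finset (Fin n) :=
        Finset.univ.filter (fun i => φ (SemidirectProduct.right w) i = i) with hBadDef
      have hgood : ∀ p : (Fin n → Q) × Fin n, wPerm n φ πh w p = p → p.2 ∈ Bad := by
        intro p hfix
        simp only [hBadDef, Finset.mem_filter, Finset.mem_univ, true_and]
        exact congrArg Prod.snd hfix
      have hBadCard : ((Bad.card : ℝ)) ≤ (M : ℝ) * (ε₀ * n) := by
        have := hfixG (SemidirectProduct.right w) (hN1 _ (hS0S1 (hrS0 w hw))) hr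
        rw [hBadDef]
        calc ((Finset.univ.filter (fun i => φ (SemidirectProduct.right w) i = i)).card : ℝ)
            ≤ ε₀ * n := this
          _ = 1 * (ε₀ * n) := by ring
          _ ≤ (M : ℝ) * (ε₀ * n) := by
              apply mul_le_mul_of_nonneg_right ?_ (by positivity)
              exact_mod_cast Nat.one_le_iff_ne_zero.2 (by omega)
      have htrans : ((Finset.univ.filter fun i : Fin N =>
          (Equiv.permCongr e (wPerm n φ πh w)) i = i).card : ℝ)
          ≤ (Fintype.card (Fin n → Q) : ℝ) * Bad.card := by
        refine sofic_count_aux e _ (fun p => wPerm n φ πh w p = p) ?_ Bad hgood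
        intro p
        simp only [Equiv.permCongr_apply, Equiv.symm_apply_apply]
        exact e.apply_eq_iff_eq
      calc ((Finset.univ.filter fun i : Fin N =>
            (Equiv.permCongr e (wPerm n φ πh w)) i = i).card : ℝ)
          ≤ (Fintype.card (Fin n → Q) : ℝ) * Bad.card := htrans
        _ ≤ (Fintype.card (Fin n → Q) : ℝ) * ((M : ℝ) * (ε₀ * n)) := by
            apply mul_le_mul_of_nonneg_left hBadCard hqQpos
        _ = ε * N := by
            rw [hNcast, ← hMε]
            ring
end

section
/- Let n be a positive integer and let v ∈ M_n(ℂ) be a matrix all of whose entries are 0 or 1 and which has exactly one entry equal to 1 in each row. Let r be the number of columns of v all of whose entries are 0. Then there exists a permutation σ of Fin n such that v and the permutation matrix P_σ differ in exactly 2r entries; in particular ‖v − P_σ‖_F² = 2r. -/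
/-- The permutation matrix of `σ`: `(P_σ)_{ij} = 1` if `i = σ j`, and `0` otherwise. -/
def permMatrix (n : ℕ) (σ : Equiv.Perm (Fin n)) : Matrix (Fin n) (Fin n) ℂ :=
  fun i j => if i = σ j then 1 else 0

open Finset in
/-- Any `f : Fin n → Fin n` admits a permutation `τ` disagreeing with it on exactly
`n - |range f|` points. -/
lemma exists_perm_agree (n : ℕ) (hn : 0 < n) (f : Fin n → Fin n) :
    ∃ τ : Equiv.Perm (Fin n),
      (Finset.univ.filter fun i => τ i ≠ f i).card
        = n - (Finset.image f Finset.univ).card := by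
  classical
  have : Nonempty (Fin n) := ⟨⟨0, hn⟩⟩
  set T : Finset (Fin n) := Finset.image f Finset.univ with hT
  set rep : Fin n → Fin n := Function.invFun f with hrep
  have hfrep : ∀ j ∈ T, f (rep j) = j := by
    intro j hj
    obtain ⟨i, _, hi⟩ := Finset.mem_image.mp hj
    exact Function.invFun_eq ⟨i, hi⟩
  set S : Finset (Fin n) := T.image rep with hS
  have hfS : ∀ x ∈ S, f x ∈ T := by
    intro x hx
    obtain ⟨j, hj, hjx⟩ := Finset.mem_image.mp hx
    rw [← hjx, hfrep j hj]; exact hj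
  have hrepf : ∀ x ∈ S, rep (f x) = x := by
    intro x hx
    obtain ⟨j, hj, hjx⟩ := Finset.mem_image.mp hx
    rw [← hjx, hfrep j hj]
  let e : {x // x ∈ S} ≃ {x // x ∈ T} :=
    { toFun := fun x => ⟨f x, hfS x x.2⟩
      invFun := fun y => ⟨rep y, Finset.mem_image_of_mem rep y.2⟩
      left_inv := fun x => Subtype.ext (hrepf x x.2)
      right_inv := fun y => Subtype.ext (hfrep y y.2) }
  have hST : S.card = T.card := by
    have := Fintype.card_congr e
    simpa using this
  have hcard : Fintype.card {x // ¬ x ∈ S} = Fintype.card {x // ¬ x ∈ T} := by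
    rw [Fintype.card_subtype_compl, Fintype.card_subtype_compl]
    simp [hST]
  let e' : {x // ¬ x ∈ S} ≃ {x // ¬ x ∈ T} := Fintype.equivOfCardEq hcard
  refine ⟨Equiv.subtypeCongr e e', ?_⟩
  have hpos : ∀ x (hx : x ∈ S), Equiv.subtypeCongr e e' x = f x := by
    intro x hx
    simp [Equiv.subtypeCongr, hx, e]
  have hneg : ∀ x, x ∉ S → (Equiv.subtypeCongr e e' x) ∉ T := by
    intro x hx
    simp only [Equiv.subtypeCongr, Equiv.trans_apply,
      Equiv.sumCompl_symm_apply_of_neg hx, Equiv.sumCongr_apply, Sum.map_inr,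
      Equiv.sumCompl_apply_inr]
    exact (e' ⟨x, hx⟩).2
  have hfilter : (Finset.univ.filter fun i => Equiv.subtypeCongr e e' i ≠ f i) = Sᶜ := by
    ext x
    simp only [Finset.mem_filter, Finset.mem_univ, true_and, Finset.mem_compl]
    constructor
    · intro h hx
      exact h (hpos x hx)
    · intro hx
      intro h
      exact hneg x hx (h ▸ Finset.mem_image_of_mem f (Finset.mem_univ x))
  rw [hfilter, Finset.card_compl, hST]
  simp

open Finset in
/-- If `v` is an `n × n` matrix with `0,1` entries and exactly one `1` in each row, and `r`
is the number of zero columns of `v`, then there is a permutation `σ` such that `v` and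
`P_σ` differ in exactly `2r` entries; in particular `‖v - P_σ‖_F² = 2r`. -/
theorem exists_perm_close_to_almost_permutation
    (n : ℕ) (hn : 0 < n) (v : Matrix (Fin n) (Fin n) ℂ)
    (h01 : ∀ i j, v i j = 0 ∨ v i j = 1)
    (hrow : ∀ i, ∃! j, v i j = 1)
    (r : ℕ)
    (hr : r = (Finset.univ.filter fun j : Fin n => ∀ i, v i j = 0).card) :
    ∃ σ : Equiv.Perm (Fin n),
      (Finset.univ.filter fun p : Fin n × Fin n =>
          v p.1 p.2 ≠ permMatrix n σ p.1 p.2).card = 2 * r ∧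
      ∑ i, ∑ j, ‖v i j - permMatrix n σ i j‖ ^ 2 = 2 * r := by
  classical
  set f : Fin n → Fin n := fun i => Fintype.choose _ (hrow i) with hfdef
  have hf : ∀ i, v i (f i) = 1 := fun i => Fintype.choose_spec _ (hrow i)
  have hv1 : ∀ i j, v i j = 1 ↔ j = f i :=
    fun i j => ⟨fun h => (hrow i).unique h (hf i), fun h => h ▸ hf i⟩
  have hv0 : ∀ i j, v i j = 0 ↔ j ≠ f i := by
    intro i j
    constructor
    · intro h h'
      rw [(hv1 i j).mpr h'] at h
      exact one_ne_zero h
    · intro h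
      rcases h01 i j with h0 | h1
      · exact h0
      · exact absurd ((hv1 i j).mp h1) h
  set T : Finset (Fin n) := Finset.image f Finset.univ with hT
  -- zero columns are exactly the complement of the range of f
  have hzero : (Finset.univ.filter fun j : Fin n => ∀ i, v i j = 0) = Tᶜ := by
    ext j
    simp only [Finset.mem_filter, Finset.mem_univ, true_and, Finset.mem_compl, hT,
      Finset.mem_image]
    constructor
    · rintro h ⟨i, hi⟩
      exact ((hv0 i j).mp (h i)) hi.symm
    · intro h i
      exact (hv0 i j).mpr fun hji => h ⟨i, hji.symm⟩
  have hrT : r = n - T.card := by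
    rw [hr, hzero, Finset.card_compl]
    simp
  obtain ⟨τ, hτ⟩ := exists_perm_agree n hn f
  refine ⟨τ⁻¹, ?_⟩
  have hP : ∀ i j, permMatrix n τ⁻¹ i j = if j = τ i then 1 else 0 := by
    intro i j
    unfold permMatrix
    congr 1
    simp only [eq_iff_iff]
    constructor
    · intro h; subst h; simp
    · intro h; subst h; simp
  set B : Finset (Fin n) := Finset.univ.filter fun i => τ i ≠ f i with hB
  have hBcard : B.card = r := by rw [hB, hτ, hrT]
  have hval : ∀ i j, v i j = if j = f i then 1 else 0 := by
    intro i j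
    by_cases h : j = f i
    · rw [if_pos h]; exact (hv1 i j).mpr h
    · rw [if_neg h]; exact (hv0 i j).mpr h
  -- characterize differing entries
  have hdiff : ∀ i j, (v i j ≠ permMatrix n τ⁻¹ i j) ↔
      ((j = f i ∧ j ≠ τ i) ∨ (j = τ i ∧ j ≠ f i)) := by
    intro i j
    rw [hval, hP]
    by_cases h1 : j = f i
    · subst h1
      by_cases h2 : f i = τ i <;> simp [h2]
    · by_cases h2 : j = τ i
      · subst h2
        simp [h1]
      · simp [h1, h2]
  have hset : (Finset.univ.filter fun p : Fin n × Fin n =>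
      v p.1 p.2 ≠ permMatrix n τ⁻¹ p.1 p.2)
      = (B.image fun i => (i, f i)) ∪ (B.image fun i => (i, τ i)) := by
    ext ⟨i, j⟩
    simp only [Finset.mem_filter, Finset.mem_univ, true_and, Finset.mem_union,
      Finset.mem_image, hB, Prod.mk.injEq, hdiff i j]
    constructor
    · rintro (⟨h1, h2⟩ | ⟨h1, h2⟩)
      · exact Or.inl ⟨i, fun hc => h2 (by rw [h1, ← hc]), rfl, h1.symm⟩
      · exact Or.inr ⟨i, fun hc => h2 (by rw [h1, hc]), rfl, h1.symm⟩
    · rintro (⟨a, ha, rfl, rfl⟩ | ⟨a, ha, rfl, rfl⟩)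
      · exact Or.inl ⟨rfl, fun hc => ha hc.symm⟩
      · exact Or.inr ⟨rfl, fun hc => ha hc⟩
  have hinj1 : Function.Injective (fun i : Fin n => (i, f i)) := fun a b h => (Prod.ext_iff.mp h).1
  have hinj2 : Function.Injective (fun i : Fin n => (i, τ i)) := fun a b h => (Prod.ext_iff.mp h).1
  have hdisj : Disjoint (B.image fun i => (i, f i)) (B.image fun i => (i, τ i)) := by
    rw [Finset.disjoint_left]
    rintro ⟨i, j⟩ h1 h2
    obtain ⟨a, ha, hae⟩ := Finset.mem_image.mp h1
    obtain ⟨b, hb, hbe⟩ := Finset.mem_image.mp h2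
    simp only [Prod.mk.injEq] at hae hbe
    obtain ⟨ha1, ha2⟩ := hae
    obtain ⟨hb1, hb2⟩ := hbe
    apply (Finset.mem_filter.mp hb).2
    rw [hb2, ← ha2, ha1, hb1]
  have hcard : (Finset.univ.filter fun p : Fin n × Fin n =>
      v p.1 p.2 ≠ permMatrix n τ⁻¹ p.1 p.2).card = 2 * r := by
    rw [hset, Finset.card_union_of_disjoint hdisj,
      Finset.card_image_of_injective _ hinj1, Finset.card_image_of_injective _ hinj2,
      hBcard]
    ring
  refine ⟨hcard, ?_⟩
  have hterm : ∀ i j, ‖v i j - permMatrix n τ⁻¹ i j‖ ^ 2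
      = if v i j ≠ permMatrix n τ⁻¹ i j then (1 : ℝ) else 0 := by
    intro i j
    rw [hval, hP]
    by_cases h1 : j = f i
    · subst h1
      by_cases h2 : f i = τ i <;> simp [h2]
    · by_cases h2 : j = τ i
      · subst h2
        simp [h1]
      · simp [h1, h2]
  calc ∑ i, ∑ j, ‖v i j - permMatrix n τ⁻¹ i j‖ ^ 2
      = ∑ i, ∑ j, if v i j ≠ permMatrix n τ⁻¹ i j then (1 : ℝ) else 0 := by
        refine Finset.sum_congr rfl fun i _ => Finset.sum_congr rfl fun j _ => hterm i j
    _ = ∑ p : Fin n × Fin n, if v p.1 p.2 ≠ permMatrix n τ⁻¹ p.1 p.2 then (1 : ℝ) else 0 := by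
        rw [← Fintype.sum_prod_type']
    _ = ((Finset.univ.filter fun p : Fin n × Fin n =>
          v p.1 p.2 ≠ permMatrix n τ⁻¹ p.1 p.2).card : ℝ) := by
        rw [Finset.sum_boole]
    _ = 2 * r := by rw [hcard]; push_cast; ring
end

section
/- Let m be a positive integer and i : Fin m → {0,1}. Let (n_k)_{k∈ℕ} be a sequence of positive integers and, for each k, let p_{1,k}, …, p_{m,k} be permutations of Fin n_k. Assume that for every pair j ≠ j', the fraction (1/n_k)·|{ξ ∈ Fin n_k : p_{j,k}(ξ) = p_{j',k}(ξ)}| tends to 0 as k → ∞. Then (1/(n_k · 2^{n_k})) · |{(ξ, η) : ξ ∈ Fin n_k, η : Fin n_k → {0,1}, and η(p_{j,k}⁻¹(ξ)) = i_j for all j = 1, …, m}| tends to 2^{−m} as k → ∞. -/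
open Filter

/-- Counting functions with prescribed values on an injective family. -/
lemma count_fix {N M : ℕ} (f : Fin M → Fin N) (hf : Function.Injective f) (i : Fin M → Fin 2) :
    (Finset.univ.filter fun η : Fin N → Fin 2 => ∀ j, η (f j) = i j).card = 2 ^ (N - M) := by
  classical
  set s : Finset (Fin N) := Finset.image f Finset.univ with hs
  have hmem : ∀ {x : Fin N}, x ∈ s → ∃ j, f j = x := by
    intro x hx
    obtain ⟨j, -, hj⟩ := Finset.mem_image.mp hx
    exact ⟨j, hj⟩
  have key : (Finset.univ.filter fun η : Fin N → Fin 2 => ∀ j, η (f j) = i j).card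
      = (Finset.univ : Finset ({x : Fin N // x ∉ s} → Fin 2)).card := by
    refine Finset.card_nbij' (fun η => fun x => η x.1)
      (fun g => fun x => if h : x ∈ s then i (hmem h).choose else g ⟨x, h⟩)
      (fun _ _ => Finset.mem_univ _) ?_ ?_ ?_
    · intro g _
      refine Finset.mem_filter.mpr ⟨Finset.mem_univ _, fun j => ?_⟩
      have hx : f j ∈ s := by
        rw [hs]; exact Finset.mem_image_of_mem f (Finset.mem_univ j)
      simp only [dif_pos hx]
      exact congrArg i (hf (hmem hx).choose_spec)
    · intro η hη
      have hη' := (Finset.mem_filter.mp hη).2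
      funext x
      by_cases h : x ∈ s
      · simp only [dif_pos h]
        rw [← hη' (hmem h).choose, (hmem h).choose_spec]
      · simp only [dif_neg h]
    · intro g _
      funext x
      simp only [dif_neg x.2]
  rw [key, Finset.card_univ, Fintype.card_fun, Fintype.card_fin]
  congr 1
  have hcs : s.card = M := by
    rw [hs, Finset.card_image_of_injective _ hf, Finset.card_univ, Fintype.card_fin]
  rw [Fintype.card_subtype_compl, Fintype.card_fin, Fintype.card_coe, hcs]

lemma card_bad_le {N m : ℕ} (p : Fin m → Equiv.Perm (Fin N))
    [DecidablePred fun ξ : Fin N => Function.Injective fun j => (p j)⁻¹ ξ] :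
    (Finset.univ.filter fun ξ : Fin N =>
        ¬ Function.Injective fun j => (p j)⁻¹ ξ).card ≤
      ∑ q ∈ (Finset.univ : Finset (Fin m)).offDiag,
        (Finset.univ.filter fun η : Fin N => p q.1 η = p q.2 η).card := by
  classical
  have hsub : (Finset.univ.filter fun ξ : Fin N => ¬ Function.Injective fun j => (p j)⁻¹ ξ)
      ⊆ (Finset.univ : Finset (Fin m)).offDiag.biUnion
          (fun q => Finset.univ.filter fun ξ : Fin N => (p q.1)⁻¹ ξ = (p q.2)⁻¹ ξ) := by
    intro ξ hξ
    simp only [Finset.mem_filter, Finset.mem_univ, true_and] at hξ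
    obtain ⟨j, j', heq, hne⟩ := Function.not_injective_iff.mp hξ
    refine Finset.mem_biUnion.mpr ⟨(j, j'),
      Finset.mem_offDiag.mpr ⟨Finset.mem_univ _, Finset.mem_univ _, hne⟩, ?_⟩
    simpa using heq
  calc (Finset.univ.filter fun ξ : Fin N =>
        ¬ Function.Injective fun j => (p j)⁻¹ ξ).card
      ≤ ((Finset.univ : Finset (Fin m)).offDiag.biUnion
          (fun q => Finset.univ.filter fun ξ : Fin N => (p q.1)⁻¹ ξ = (p q.2)⁻¹ ξ)).card :=
        Finset.card_le_card hsub
    _ ≤ ∑ q ∈ (Finset.univ : Finset (Fin m)).offDiag,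
          (Finset.univ.filter fun ξ : Fin N => (p q.1)⁻¹ ξ = (p q.2)⁻¹ ξ).card :=
        Finset.card_biUnion_le
    _ = _ := by
        refine Finset.sum_congr rfl fun q _ => ?_
        refine Finset.card_nbij' (fun ξ => (p q.1)⁻¹ ξ) (fun η => p q.1 η) ?_ ?_ ?_ ?_
        · intro ξ hξ
          simp only [Finset.coe_filter, Set.mem_setOf_eq, Finset.mem_filter, Finset.mem_univ, true_and] at hξ ⊢
          rw [← Equiv.Perm.mul_apply, mul_inv_cancel, Equiv.Perm.one_apply, hξ, ← Equiv.Perm.mul_apply,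
            mul_inv_cancel, Equiv.Perm.one_apply]
        · intro η hη
          simp only [Finset.coe_filter, Set.mem_setOf_eq, Finset.mem_filter, Finset.mem_univ, true_and] at hη ⊢
          rw [← Equiv.Perm.mul_apply, inv_mul_cancel, Equiv.Perm.one_apply, hη, ← Equiv.Perm.mul_apply,
            inv_mul_cancel, Equiv.Perm.one_apply]
        · intro ξ _; simp
        · intro η _; simp

lemma count_eq {N m : ℕ} (p : Fin m → Equiv.Perm (Fin N)) (i : Fin m → Fin 2)
    [DecidablePred fun ξ : Fin N => Function.Injective fun j => (p j)⁻¹ ξ] :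
    (Finset.univ.filter fun x : Fin N × (Fin N → Fin 2) =>
        ∀ j, x.2 ((p j)⁻¹ x.1) = i j).card
      = (Finset.univ.filter fun ξ : Fin N =>
            Function.Injective fun j => (p j)⁻¹ ξ).card * 2 ^ (N - m)
        + ∑ ξ ∈ Finset.univ.filter fun ξ : Fin N =>
              ¬ Function.Injective fun j => (p j)⁻¹ ξ,
            (Finset.univ.filter fun η : Fin N → Fin 2 =>
              ∀ j, η ((p j)⁻¹ ξ) = i j).card := by
  classical
  have h1 : (Finset.univ.filter fun x : Fin N × (Fin N → Fin 2) =>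
        ∀ j, x.2 ((p j)⁻¹ x.1) = i j).card
      = ∑ ξ : Fin N, (Finset.univ.filter fun η : Fin N → Fin 2 =>
              ∀ j, η ((p j)⁻¹ ξ) = i j).card := by
    rw [Finset.card_eq_sum_card_fiberwise (f := Prod.fst) (t := Finset.univ)
      (fun x _ => Finset.mem_univ _)]
    refine Finset.sum_congr rfl fun ξ _ => ?_
    refine Finset.card_nbij' (fun x => x.2) (fun η => (ξ, η)) ?_ ?_ ?_ ?_
    · intro x hx
      have h1 := Finset.mem_filter.mp hx
      have h2 := Finset.mem_filter.mp h1.1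
      refine Finset.mem_filter.mpr ⟨Finset.mem_univ _, fun j => ?_⟩
      rw [← h1.2]
      exact h2.2 j
    · intro η hη
      have h2 := Finset.mem_filter.mp hη
      exact Finset.mem_filter.mpr ⟨Finset.mem_filter.mpr ⟨Finset.mem_univ _, h2.2⟩, rfl⟩
    · intro x hx
      have h1 := Finset.mem_filter.mp hx
      exact Prod.ext h1.2.symm rfl
    · intro η _; rfl
  rw [h1, ← Finset.sum_filter_add_sum_filter_not Finset.univ
      (fun ξ => Function.Injective fun j => (p j)⁻¹ ξ)]
  congr 1
  have hgood : ∀ ξ ∈ Finset.univ.filter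
      (fun ξ : Fin N => Function.Injective fun j => (p j)⁻¹ ξ),
      (Finset.univ.filter fun η : Fin N → Fin 2 =>
        ∀ j, η ((p j)⁻¹ ξ) = i j).card = 2 ^ (N - m) := by
    intro ξ hξ
    exact count_fix _ (Finset.mem_filter.mp hξ).2 i
  rw [Finset.sum_congr rfl hgood, Finset.sum_const, smul_eq_mul]

/-- If, for each pair `j ≠ j'`, the proportion of coincidence points of `p_{j,k}` and
`p_{j',k}` tends to `0`, then the proportion of pairs `(ξ, η)` with
`η (p_{j,k}⁻¹ ξ) = i j` for all `j` tends to `2⁻ᵐ`. -/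
theorem tendsto_proportion_prescribed_translates
    (m : ℕ) (hm : 0 < m) (i : Fin m → Fin 2)
    (n : ℕ → ℕ) (hn : ∀ k, 0 < n k)
    (p : (k : ℕ) → Fin m → Equiv.Perm (Fin (n k)))
    (hcoinc : ∀ j j' : Fin m, j ≠ j' →
      Tendsto (fun k =>
          ((Finset.univ.filter fun ξ : Fin (n k) => p k j ξ = p k j' ξ).card : ℝ) / n k)
        atTop (nhds 0)) :
    Tendsto (fun k =>
        ((Finset.univ.filter fun x : Fin (n k) × (Fin (n k) → Fin 2) =>
            ∀ j : Fin m, x.2 ((p k j)⁻¹ x.1) = i j).card : ℝ) / (n k * 2 ^ n k))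
      atTop (nhds (((2 : ℝ) ^ m)⁻¹)) := by
  classical
  set bad : ℕ → ℝ := fun k => ∑ q ∈ (Finset.univ : Finset (Fin m)).offDiag,
    ((Finset.univ.filter fun η : Fin (n k) => p k q.1 η = p k q.2 η).card : ℝ) / n k with hbad
  have hbad0 : Tendsto bad atTop (nhds 0) := by
    have h := tendsto_finset_sum ((Finset.univ : Finset (Fin m)).offDiag)
      (fun q hq => hcoinc q.1 q.2 (Finset.mem_offDiag.mp hq).2.2)
    simpa using h
  have hbadform : ∀ k, bad k = ((∑ q ∈ (Finset.univ : Finset (Fin m)).offDiag,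
      (Finset.univ.filter fun η : Fin (n k) => p k q.1 η = p k q.2 η).card : ℕ) : ℝ) / n k := by
    intro k
    rw [hbad]
    push_cast
    rw [Finset.sum_div]
  have hBcard : ∀ k, ((Finset.univ.filter fun ξ : Fin (n k) =>
      ¬ Function.Injective fun j => (p k j)⁻¹ ξ).card : ℝ) / n k ≤ bad k := by
    intro k
    rw [hbadform]
    have hNpos : (0:ℝ) < (n k : ℝ) := by exact_mod_cast hn k
    gcongr
    exact_mod_cast card_bad_le (p k)
  have hev : ∀ᶠ k in atTop, m ≤ n k := by
    have h1 : ∀ᶠ k in atTop, bad k < 1 := hbad0.eventually (eventually_lt_nhds one_pos)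
    filter_upwards [h1] with k hk
    by_contra hnk
    push_neg at hnk
    have hall : ∀ ξ : Fin (n k), ¬ Function.Injective fun j => (p k j)⁻¹ ξ := by
      intro ξ hinj
      have := Fintype.card_le_of_injective _ hinj
      simp only [Fintype.card_fin] at this
      omega
    have hBuniv : (Finset.univ.filter fun ξ : Fin (n k) =>
        ¬ Function.Injective fun j => (p k j)⁻¹ ξ) = Finset.univ :=
      Finset.filter_true_of_mem (fun ξ _ => hall ξ)
    have hb := hBcard k
    rw [hBuniv, Finset.card_univ, Fintype.card_fin] at hb
    have hNpos : (0:ℝ) < (n k : ℝ) := by exact_mod_cast hn k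
    rw [div_self hNpos.ne'] at hb
    linarith
  have hkey : ∀ k, m ≤ n k →
      |((Finset.univ.filter fun x : Fin (n k) × (Fin (n k) → Fin 2) =>
          ∀ j : Fin m, x.2 ((p k j)⁻¹ x.1) = i j).card : ℝ) / (n k * 2 ^ n k)
        - ((2 : ℝ) ^ m)⁻¹| ≤ bad k := by
    intro k hmk
    have hNpos : (0:ℝ) < (n k : ℝ) := by exact_mod_cast hn k
    set g : ℝ := ((Finset.univ.filter fun ξ : Fin (n k) =>
        Function.Injective fun j => (p k j)⁻¹ ξ).card : ℝ) with hg
    set b : ℝ := ((Finset.univ.filter fun ξ : Fin (n k) =>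
        ¬ Function.Injective fun j => (p k j)⁻¹ ξ).card : ℝ) with hbdef
    set S : ℝ := ((∑ ξ ∈ Finset.univ.filter fun ξ : Fin (n k) =>
        ¬ Function.Injective fun j => (p k j)⁻¹ ξ,
        (Finset.univ.filter fun η : Fin (n k) → Fin 2 =>
          ∀ j, η ((p k j)⁻¹ ξ) = i j).card : ℕ) : ℝ) with hSdef
    set C : ℝ := ((Finset.univ.filter fun x : Fin (n k) × (Fin (n k) → Fin 2) =>
        ∀ j : Fin m, x.2 ((p k j)⁻¹ x.1) = i j).card : ℝ) with hCdef
    have hC : C = g * 2 ^ (n k - m) + S := by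
      rw [hCdef, hg, hSdef]
      exact_mod_cast count_eq (p k) i
    have hgb : g + b = (n k : ℝ) := by
      rw [hg, hbdef, ← Nat.cast_add]
      norm_cast
      rw [Finset.card_filter_add_card_filter_not, Finset.card_univ, Fintype.card_fin]
    have hS_ub : S ≤ b * 2 ^ (n k) := by
      rw [hSdef, hbdef]
      have : (∑ ξ ∈ Finset.univ.filter fun ξ : Fin (n k) =>
          ¬ Function.Injective fun j => (p k j)⁻¹ ξ,
          (Finset.univ.filter fun η : Fin (n k) → Fin 2 =>
            ∀ j, η ((p k j)⁻¹ ξ) = i j).card)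
          ≤ (Finset.univ.filter fun ξ : Fin (n k) =>
            ¬ Function.Injective fun j => (p k j)⁻¹ ξ).card * 2 ^ n k := by
        have := Finset.sum_le_card_nsmul
          (Finset.univ.filter fun ξ : Fin (n k) =>
            ¬ Function.Injective fun j => (p k j)⁻¹ ξ)
          (fun ξ => (Finset.univ.filter fun η : Fin (n k) → Fin 2 =>
            ∀ j, η ((p k j)⁻¹ ξ) = i j).card)
          (2 ^ n k)
          (fun ξ _ => by
            calc (Finset.univ.filter fun η : Fin (n k) → Fin 2 =>
                ∀ j, η ((p k j)⁻¹ ξ) = i j).card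
                ≤ (Finset.univ : Finset (Fin (n k) → Fin 2)).card := Finset.card_filter_le _ _
              _ = 2 ^ n k := by
                  rw [Finset.card_univ, Fintype.card_fun, Fintype.card_fin, Fintype.card_fin])
        simpa [smul_eq_mul] using this
      exact_mod_cast this
    have hSnn : (0:ℝ) ≤ S := by rw [hSdef]; exact Nat.cast_nonneg _
    have hbnn : (0:ℝ) ≤ b := by rw [hbdef]; exact Nat.cast_nonneg _
    have hpw : (2:ℝ) ^ (n k - m) * 2 ^ m = 2 ^ (n k) := by
      rw [← pow_add, Nat.sub_add_cancel hmk]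
    have hple : (2:ℝ) ^ (n k - m) ≤ 2 ^ (n k) :=
      pow_le_pow_right₀ (by norm_num) (Nat.sub_le _ _)
    have hnum : C - ((n k : ℝ) * 2 ^ n k) * ((2:ℝ) ^ m)⁻¹ = S - b * 2 ^ (n k - m) := by
      have e1 : ((n k : ℝ) * 2 ^ n k) * ((2:ℝ) ^ m)⁻¹ = (n k : ℝ) * 2 ^ (n k - m) := by
        rw [← hpw]
        have h2m : (0:ℝ) < 2 ^ m := by positivity
        field_simp
      rw [hC, e1, ← hgb]
      ring
    have habs : |S - b * 2 ^ (n k - m)| ≤ b * 2 ^ (n k) := by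
      rw [abs_le]
      constructor
      · have : b * 2 ^ (n k - m) ≤ b * 2 ^ (n k) := mul_le_mul_of_nonneg_left hple hbnn
        linarith
      · have h2 : (0:ℝ) ≤ b * 2 ^ (n k - m) := mul_nonneg hbnn (by positivity)
        linarith
    have hD : (0:ℝ) < (n k : ℝ) * 2 ^ (n k) := mul_pos hNpos (by positivity)
    have heq : C / ((n k : ℝ) * 2 ^ n k) - ((2:ℝ) ^ m)⁻¹
        = (S - b * 2 ^ (n k - m)) / ((n k : ℝ) * 2 ^ n k) := by
      rw [← hnum, sub_div, mul_div_cancel_left₀ _ hD.ne']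
    calc |C / ((n k : ℝ) * 2 ^ n k) - ((2:ℝ) ^ m)⁻¹|
        = |S - b * 2 ^ (n k - m)| / ((n k : ℝ) * 2 ^ n k) := by
          rw [heq, abs_div, abs_of_pos hD]
      _ ≤ (b * 2 ^ (n k)) / ((n k : ℝ) * 2 ^ n k) := by gcongr
      _ = b / (n k : ℝ) := by
          rw [mul_comm b _, mul_comm ((n k : ℝ)) _,
            mul_div_mul_left _ _ (by positivity : ((2:ℝ) ^ n k) ≠ 0)]
      _ ≤ bad k := hBcard k
  refine tendsto_of_tendsto_of_tendsto_of_le_of_le'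
    (g := fun k => ((2:ℝ) ^ m)⁻¹ - bad k) (h := fun k => ((2:ℝ) ^ m)⁻¹ + bad k)
    ?_ ?_ ?_ ?_
  · simpa using tendsto_const_nhds.sub hbad0
  · simpa using tendsto_const_nhds.add hbad0
  · filter_upwards [hev] with k hk
    have := (abs_le.mp (hkey k hk)).1
    linarith
  · filter_upwards [hev] with k hk
    have := (abs_le.mp (hkey k hk)).2
    linarith
end
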